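/- arXiv:2106.06079 — 2 statements merged into one kernel-verified Lean document; each statement's English description precedes it below -/
import Mathlib

section
/- For a finite-horizon deterministic MDP with horizon h, reward function R, and a sequentially consistent base policy π̃ (one that, restarted from any intermediate state of a trajectory it generates, reproduces the remainder of that trajectory), the rollout policy π_roll defined by greedily choosing at each step the action maximizing the one-step reward plus the value of following π̃ thereafter satisfies V_h^{π_roll}(s₀) ≥ V_h^{π̃}(s₀) for every starting state s₀. -/
/-- Value of running a stationary (hence sequentially consistent) base policy `πb`
for `h` steps in a deterministic MDP with transition `T` and reward `R`. -/
def baseValue {S A : Type*} (T : S → A → S) (R : S → A → S → ℝ) (πb : S → A) :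
    ℕ → S → ℝ
  | 0, _ => 0
  | h + 1, s => R s (πb s) (T s (πb s)) + baseValue T R πb h (T s (πb s))

/-- Value of running the rollout policy `g` (indexed by remaining horizon) for `h`
steps in a deterministic MDP. -/
def rolloutValue {S A : Type*} (T : S → A → S) (R : S → A → S → ℝ) (g : ℕ → S → A) :
    ℕ → S → ℝ
  | 0, _ => 0
  | h + 1, s => R s (g h s) (T s (g h s)) + rolloutValue T R g h (T s (g h s))

/-- Rollout improvement for a deterministic finite-horizon MDP: if at each step the
rollout policy `g` chooses an action maximizing the one-step reward plus the value of
following the (sequentially consistent, stationary) base policy `πb` thereafter, then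
the rollout value dominates the base-policy value from every starting state. -/
theorem stmt_0 {S A : Type*} (T : S → A → S) (R : S → A → S → ℝ)
    (πb : S → A) (g : ℕ → S → A)
    (hg : ∀ n s a, R s a (T s a) + baseValue T R πb n (T s a) ≤
      R s (g n s) (T s (g n s)) + baseValue T R πb n (T s (g n s))) :
    ∀ h s₀, baseValue T R πb h s₀ ≤ rolloutValue T R g h s₀ := by
  intro h
  induction h with
  | zero => intro s₀; simp [baseValue, rolloutValue]
  | succ n ih =>
    intro s₀
    calc baseValue T R πb (n+1) s₀
        = R s₀ (πb s₀) (T s₀ (πb s₀)) + baseValue T R πb n (T s₀ (πb s₀)) := rfl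
      _ ≤ R s₀ (g n s₀) (T s₀ (g n s₀)) + baseValue T R πb n (T s₀ (g n s₀)) := hg n s₀ (πb s₀)
      _ ≤ R s₀ (g n s₀) (T s₀ (g n s₀)) + rolloutValue T R g n (T s₀ (g n s₀)) := by
          exact add_le_add_right (ih _) _
      _ = rolloutValue T R g (n+1) s₀ := rfl
end

section
/- Expected improvement is monotone increasing in the standard deviation: for fixed μ and threshold y*, the function σ ↦ (y* − μ)Φ((y* − μ)/σ) + σφ((y* − μ)/σ) on σ > 0 is increasing, with derivative φ((y* − μ)/σ) > 0. -/
/-- The standard normal density `φ`. -/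
noncomputable def stdNormalPDF (z : ℝ) : ℝ := (Real.sqrt (2 * Real.pi))⁻¹ * Real.exp (-z ^ 2 / 2)

/-- The standard normal CDF `Φ`. -/
noncomputable def stdNormalCDF (z : ℝ) : ℝ := ∫ t in Set.Iic z, stdNormalPDF t

lemma stdNormalPDF_pos (z : ℝ) : 0 < stdNormalPDF z := by
  unfold stdNormalPDF
  positivity

lemma stdNormalPDF_continuous : Continuous stdNormalPDF := by
  unfold stdNormalPDF
  continuity

lemma stdNormalPDF_integrable : MeasureTheory.Integrable stdNormalPDF := by
  have h : stdNormalPDF = fun z => (Real.sqrt (2 * Real.pi))⁻¹ * Real.exp (-(1/2 : ℝ) * z ^ 2) := by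
    funext z; unfold stdNormalPDF; ring_nf
  rw [h]
  exact (integrable_exp_neg_mul_sq (by norm_num : (0:ℝ) < 1/2)).const_mul _

lemma hasDerivAt_stdNormalCDF (x : ℝ) : HasDerivAt stdNormalCDF (stdNormalPDF x) x := by
  have hint : ∀ a b : ℝ, IntervalIntegrable stdNormalPDF MeasureTheory.volume a b :=
    fun a b => stdNormalPDF_integrable.intervalIntegrable
  have key : ∀ y : ℝ, stdNormalCDF y = stdNormalCDF 0 + ∫ t in (0:ℝ)..y, stdNormalPDF t := by
    intro y
    unfold stdNormalCDF
    rw [← sub_eq_iff_eq_add', intervalIntegral.integral_Iic_sub_Iic (stdNormalPDF_integrable.integrableOn)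
      (stdNormalPDF_integrable.integrableOn)]
  have h1 : HasDerivAt (fun y => stdNormalCDF 0 + ∫ t in (0:ℝ)..y, stdNormalPDF t)
      (stdNormalPDF x) x := by
    have := (intervalIntegral.integral_hasDerivAt_right (hint 0 x)
      (stdNormalPDF_continuous.stronglyMeasurableAtFilter _ _)
      stdNormalPDF_continuous.continuousAt)
    simpa using this.const_add (stdNormalCDF 0)
  exact h1.congr_of_eventuallyEq (Filter.Eventually.of_forall key)

lemma hasDerivAt_stdNormalPDF (z : ℝ) :
    HasDerivAt stdNormalPDF (-z * stdNormalPDF z) z := by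
  have h1 : HasDerivAt (fun z : ℝ => -z ^ 2 / 2) (-z) z := by
    have := (hasDerivAt_pow 2 z).neg.div_const 2
    refine this.congr_deriv ?_
    push_cast; ring
  have h2 : HasDerivAt (fun z : ℝ => Real.exp (-z ^ 2 / 2))
      (Real.exp (-z ^ 2 / 2) * (-z)) z := (Real.hasDerivAt_exp _).comp z h1
  have := h2.const_mul (Real.sqrt (2 * Real.pi))⁻¹
  unfold stdNormalPDF
  refine this.congr_deriv ?_
  ring

/-- Expected improvement is increasing in the standard deviation: for fixed `μ` and
threshold `y*`, `σ ↦ (y* − μ)Φ((y* − μ)/σ) + σφ((y* − μ)/σ)` is strictly increasing on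
`σ > 0`, with derivative `φ((y* − μ)/σ) > 0` at every `σ > 0`. -/
theorem stmt_6 (μ ystar : ℝ) :
    StrictMonoOn (fun σ : ℝ =>
        (ystar - μ) * stdNormalCDF ((ystar - μ) / σ) + σ * stdNormalPDF ((ystar - μ) / σ))
      (Set.Ioi 0) ∧
      ∀ σ : ℝ, 0 < σ →
        HasDerivAt (fun σ : ℝ =>
            (ystar - μ) * stdNormalCDF ((ystar - μ) / σ) + σ * stdNormalPDF ((ystar - μ) / σ))
          (stdNormalPDF ((ystar - μ) / σ)) σ ∧
        0 < stdNormalPDF ((ystar - μ) / σ) := by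
  set a := ystar - μ with ha
  have hder : ∀ σ : ℝ, 0 < σ →
      HasDerivAt (fun σ : ℝ => a * stdNormalCDF (a / σ) + σ * stdNormalPDF (a / σ))
        (stdNormalPDF (a / σ)) σ := by
    intro σ hσ
    have hσ0 : σ ≠ 0 := ne_of_gt hσ
    have hinner : HasDerivAt (fun σ : ℝ => a / σ) (-a / σ ^ 2) σ := by
      have := (hasDerivAt_inv hσ0).const_mul a
      refine this.congr_deriv ?_
      field_simp
    have hΦ : HasDerivAt (fun σ : ℝ => stdNormalCDF (a / σ))
        (stdNormalPDF (a / σ) * (-a / σ ^ 2)) σ :=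
      (hasDerivAt_stdNormalCDF (a / σ)).comp σ hinner
    have hφ : HasDerivAt (fun σ : ℝ => stdNormalPDF (a / σ))
        ((-(a / σ) * stdNormalPDF (a / σ)) * (-a / σ ^ 2)) σ :=
      (hasDerivAt_stdNormalPDF (a / σ)).comp σ hinner
    have h := (hΦ.const_mul a).add ((hasDerivAt_id σ).mul hφ)
    refine h.congr_deriv ?_
    simp only [id]
    field_simp
    ring
  refine ⟨?_, fun σ hσ => ⟨hder σ hσ, stdNormalPDF_pos _⟩⟩
  have : ∀ σ ∈ interior (Set.Ioi (0:ℝ)),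
      0 < deriv (fun σ : ℝ => a * stdNormalCDF (a / σ) + σ * stdNormalPDF (a / σ)) σ := by
    intro σ hσ
    rw [interior_Ioi] at hσ
    rw [(hder σ hσ).deriv]
    exact stdNormalPDF_pos _
  exact strictMonoOn_of_deriv_pos (convex_Ioi 0)
    (fun σ hσ => ((hder σ hσ).continuousAt.continuousWithinAt)) this
end
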